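/- Let s ∈ (0,1), α ∈ (0,1), and for ε ∈ (0,1/2) define I₄(ε) = ∫_{1−ε}^{1/(1+ε)} t^{s−α}(1 − t^α)[ (1−t)^{-(2+s)} + (1+t)^{-(2+s)} ] dt. Then 0 ≤ I₄(ε) ≤ C ε^{1−s} for some constant C depending only on s and α; in particular I₄(ε) → 0 as ε → 0⁺. -/

import Mathlib

open MeasureTheory intervalIntegral Filter

lemma I4_aux (s α : ℝ) (hs0 : 0 < s) (hs1 : s < 1) (hα0 : 0 < α) (hα1 : α < 1)
    (ε : ℝ) (hε0 : 0 < ε) (hε2 : ε < 1/2) :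
    0 ≤ (∫ t in (1 - ε)..(1 / (1 + ε)), t ^ (s - α) * (1 - t ^ α) *
          ((1 - t) ^ (-(2 + s)) + (1 + t) ^ (-(2 + s)))) ∧
    (∫ t in (1 - ε)..(1 / (1 + ε)), t ^ (s - α) * (1 - t ^ α) *
          ((1 - t) ^ (-(2 + s)) + (1 + t) ^ (-(2 + s)))) ≤ (4 / s) * ε ^ (1 - s) := by
  have h1ε : (0:ℝ) < 1 + ε := by linarith
  set a : ℝ := 1 - ε with ha_def
  set b : ℝ := 1 / (1 + ε) with hb_def
  have hab : a ≤ b := by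
    rw [hb_def, le_div_iff₀ h1ε]; nlinarith
  have hb1 : b < 1 := by
    rw [hb_def, div_lt_one h1ε]; linarith
  have ha2 : 1/2 < a := by rw [ha_def]; linarith
  have hmem : ∀ t ∈ Set.Icc a b, 1/2 < t ∧ t < 1 := by
    intro t ht
    exact ⟨lt_of_lt_of_le ha2 ht.1, lt_of_le_of_lt ht.2 hb1⟩
  -- nonnegativity of the integrand
  have hnn : ∀ t ∈ Set.Icc a b, 0 ≤ t ^ (s - α) * (1 - t ^ α) *
      ((1 - t) ^ (-(2 + s)) + (1 + t) ^ (-(2 + s))) := by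
    intro t ht
    obtain ⟨ht2, ht1⟩ := hmem t ht
    have ht0 : (0:ℝ) < t := by linarith
    have h2' : 0 ≤ 1 - t ^ α := by
      have := Real.rpow_le_one ht0.le ht1.le hα0.le
      linarith
    exact mul_nonneg (mul_nonneg (Real.rpow_nonneg ht0.le _) h2')
      (add_nonneg (Real.rpow_nonneg (by linarith) _) (Real.rpow_nonneg (by linarith) _))
  -- pointwise bound
  have hbd : ∀ t ∈ Set.Icc a b, t ^ (s - α) * (1 - t ^ α) *
      ((1 - t) ^ (-(2 + s)) + (1 + t) ^ (-(2 + s))) ≤ 4 * (1 - t) ^ (-(1 + s)) := by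
    intro t ht
    obtain ⟨ht2, ht1⟩ := hmem t ht
    have ht0 : (0:ℝ) < t := by linarith
    have h1t : (0:ℝ) < 1 - t := by linarith
    have htα : t ≤ t ^ α := by
      have := Real.rpow_le_rpow_of_exponent_ge ht0 ht1.le hα1.le
      rwa [Real.rpow_one] at this
    have h1 : t ^ (s - α) ≤ 2 := by
      rw [Real.rpow_sub ht0]
      have hts : t ^ s ≤ 1 := Real.rpow_le_one ht0.le ht1.le hs0.le
      have htα2 : 1/2 ≤ t ^ α := by linarith
      calc t ^ s / t ^ α ≤ 1 / (1/2) := div_le_div₀ (by norm_num) hts (by norm_num) htα2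
        _ = 2 := by norm_num
    have h2 : 1 - t ^ α ≤ 1 - t := by linarith
    have h2' : 0 ≤ 1 - t ^ α := by
      have := Real.rpow_le_one ht0.le ht1.le hα0.le
      linarith
    have h3 : (1 - t) ^ (-(2 + s)) + (1 + t) ^ (-(2 + s)) ≤ 2 * (1 - t) ^ (-(2 + s)) := by
      have hA : (1 + t : ℝ) ^ (-(2 + s)) ≤ 1 :=
        Real.rpow_le_one_of_one_le_of_nonpos (by linarith) (by linarith)
      have hB : (1:ℝ) ≤ (1 - t) ^ (-(2 + s)) :=
        Real.one_le_rpow_of_pos_of_le_one_of_nonpos h1t (by linarith) (by linarith)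
      linarith
    have hsum0 : 0 ≤ (1 - t) ^ (-(2 + s)) + (1 + t) ^ (-(2 + s)) :=
      add_nonneg (Real.rpow_nonneg h1t.le _) (Real.rpow_nonneg (by linarith) _)
    have step : t ^ (s - α) * (1 - t ^ α) * ((1 - t) ^ (-(2 + s)) + (1 + t) ^ (-(2 + s)))
        ≤ (2 * (1 - t)) * (2 * (1 - t) ^ (-(2 + s))) := by
      apply mul_le_mul _ h3 hsum0 (by positivity)
      exact mul_le_mul h1 h2 h2' (by norm_num)
    have heq : (2 * (1 - t)) * (2 * (1 - t) ^ (-(2 + s))) = 4 * (1 - t) ^ (-(1 + s)) := by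
      have h := Real.rpow_add h1t 1 (-(2 + s))
      rw [Real.rpow_one] at h
      have h' : (1 - t) * (1 - t) ^ (-(2 + s)) = (1 - t) ^ (-(1 + s)) := by
        rw [← h]; ring_nf
      calc (2 * (1 - t)) * (2 * (1 - t) ^ (-(2 + s)))
          = 4 * ((1 - t) * (1 - t) ^ (-(2 + s))) := by ring
        _ = 4 * (1 - t) ^ (-(1 + s)) := by rw [h']
    linarith
  -- integrability
  have hFc : ContinuousOn (fun t : ℝ => t ^ (s - α) * (1 - t ^ α) *
      ((1 - t) ^ (-(2 + s)) + (1 + t) ^ (-(2 + s)))) (Set.uIcc a b) := by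
    rw [Set.uIcc_of_le hab]
    apply ContinuousOn.mul
    · apply ContinuousOn.mul
      · exact continuousOn_id.rpow_const fun t ht =>
          Or.inl fun h => by simp only [id_eq] at h; linarith [(hmem t ht).1]
      · exact continuousOn_const.sub (continuousOn_id.rpow_const fun t ht =>
          Or.inl fun h => by simp only [id_eq] at h; linarith [(hmem t ht).1])
    · apply ContinuousOn.add
      · exact (continuousOn_const.sub continuousOn_id).rpow_const fun t ht =>
          Or.inl fun h => by simp only [Pi.sub_apply, id_eq] at h; linarith [(hmem t ht).2]
      · exact (continuousOn_const.add continuousOn_id).rpow_const fun t ht =>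
          Or.inl fun h => by simp only [Pi.add_apply, id_eq] at h; linarith [(hmem t ht).1]
  have hGc : ContinuousOn (fun t : ℝ => 4 * (1 - t) ^ (-(1 + s))) (Set.uIcc a b) := by
    rw [Set.uIcc_of_le hab]
    exact continuousOn_const.mul ((continuousOn_const.sub continuousOn_id).rpow_const
      fun t ht => Or.inl fun h => by simp only [Pi.sub_apply, id_eq] at h; linarith [(hmem t ht).2])
  have hFi : IntervalIntegrable (fun t : ℝ => t ^ (s - α) * (1 - t ^ α) *
      ((1 - t) ^ (-(2 + s)) + (1 + t) ^ (-(2 + s)))) volume a b :=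
    hFc.intervalIntegrable
  have hGi : IntervalIntegrable (fun t : ℝ => 4 * (1 - t) ^ (-(1 + s))) volume a b :=
    hGc.intervalIntegrable
  constructor
  · exact intervalIntegral.integral_nonneg hab hnn
  · have hmono : (∫ t in a..b, t ^ (s - α) * (1 - t ^ α) *
        ((1 - t) ^ (-(2 + s)) + (1 + t) ^ (-(2 + s))))
        ≤ ∫ t in a..b, 4 * (1 - t) ^ (-(1 + s)) :=
      intervalIntegral.integral_mono_on hab hFi hGi hbd
    -- compute the right integral
    have h1a : 1 - a = ε := by rw [ha_def]; ring
    have h1b : 1 - b = ε / (1 + ε) := by rw [hb_def]; field_simp; ring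
    have hcomp : (∫ t in a..b, (1 - t) ^ (-(1 + s)))
        = ∫ u in (1 - b)..(1 - a), u ^ (-(1 + s)) := by
      exact (intervalIntegral.integral_comp_sub_left (fun u : ℝ => u ^ (-(1 + s))) 1)
    have hεq : (0:ℝ) < ε / (1 + ε) := div_pos hε0 h1ε
    have hval : (∫ u in (1 - b)..(1 - a), u ^ (-(1 + s)))
        = ((1 - a) ^ (-(1 + s) + 1) - (1 - b) ^ (-(1 + s) + 1)) / (-(1 + s) + 1) := by
      apply integral_rpow
      refine Or.inr ⟨by intro h; nlinarith, ?_⟩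
      rw [h1a, h1b]
      exact Set.notMem_uIcc_of_lt hεq hε0
    have hexp : -(1 + s) + 1 = -s := by ring
    have hquot : (ε / (1 + ε)) ^ (-s) = ε ^ (-s) * (1 + ε) ^ s := by
      rw [Real.div_rpow hε0.le h1ε.le, Real.rpow_neg h1ε.le, div_eq_mul_inv, inv_inv]
    have hBern : (1 + ε) ^ s ≤ 1 + ε := by
      calc (1 + ε) ^ s ≤ (1 + ε) ^ (1:ℝ) :=
            Real.rpow_le_rpow_of_exponent_le (by linarith) hs1.le
        _ = 1 + ε := Real.rpow_one _
    have hεpow : ε ^ (-s) * ε = ε ^ (1 - s) := by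
      have h := Real.rpow_add hε0 (-s) 1
      rw [Real.rpow_one] at h
      rw [← h]; ring_nf
    have hεs : 0 ≤ ε ^ (-s) := Real.rpow_nonneg hε0.le _
    have hG : (∫ t in a..b, 4 * (1 - t) ^ (-(1 + s))) ≤ (4 / s) * ε ^ (1 - s) := by
      rw [intervalIntegral.integral_const_mul, hcomp, hval, hexp, h1a, h1b, hquot]
      have key : ε ^ (-s) * (1 + ε) ^ s - ε ^ (-s) ≤ ε ^ (1 - s) := by
        have h1 : ε ^ (-s) * (1 + ε) ^ s ≤ ε ^ (-s) * (1 + ε) :=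
          mul_le_mul_of_nonneg_left hBern hεs
        nlinarith [hεpow]
      have e1 : 4 * ((ε ^ (-s) - ε ^ (-s) * (1 + ε) ^ s) / -s) =
          4 * ((ε ^ (-s) * (1 + ε) ^ s - ε ^ (-s)) / s) := by
        rw [div_neg]; ring
      rw [e1, show (4:ℝ) / s * ε ^ (1 - s) = 4 * (ε ^ (1 - s) / s) by ring]
      gcongr
    linarith

theorem I4_estimate (s α : ℝ) (hs : s ∈ Set.Ioo (0:ℝ) 1) (hα : α ∈ Set.Ioo (0:ℝ) 1) :
    ∃ C : ℝ, 0 < C ∧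
      (∀ ε ∈ Set.Ioo (0:ℝ) (1/2),
        0 ≤ (∫ t in (1 - ε)..(1 / (1 + ε)), t ^ (s - α) * (1 - t ^ α) *
              ((1 - t) ^ (-(2 + s)) + (1 + t) ^ (-(2 + s)))) ∧
        (∫ t in (1 - ε)..(1 / (1 + ε)), t ^ (s - α) * (1 - t ^ α) *
              ((1 - t) ^ (-(2 + s)) + (1 + t) ^ (-(2 + s)))) ≤ C * ε ^ (1 - s)) ∧
      Tendsto (fun ε : ℝ => ∫ t in (1 - ε)..(1 / (1 + ε)), t ^ (s - α) * (1 - t ^ α) *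
              ((1 - t) ^ (-(2 + s)) + (1 + t) ^ (-(2 + s))))
        (nhdsWithin 0 (Set.Ioi 0)) (nhds 0) := by
  obtain ⟨hs0, hs1⟩ := hs
  obtain ⟨hα0, hα1⟩ := hα
  refine ⟨4 / s, by positivity, fun ε hε => I4_aux s α hs0 hs1 hα0 hα1 ε hε.1 hε.2, ?_⟩
  have hev : Set.Ioo (0:ℝ) (1/2) ∈ nhdsWithin (0:ℝ) (Set.Ioi 0) :=
    Ioo_mem_nhdsGT_of_mem (by norm_num)
  have hg : Tendsto (fun ε : ℝ => (4 / s) * ε ^ (1 - s)) (nhdsWithin 0 (Set.Ioi 0)) (nhds 0) := by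
    have h0 : Tendsto (fun ε : ℝ => ε ^ (1 - s)) (nhds 0) (nhds ((0:ℝ) ^ (1 - s))) :=
      (Real.continuousAt_rpow_const 0 (1 - s) (Or.inr (by linarith))).tendsto
    rw [Real.zero_rpow (by linarith)] at h0
    have h1 : Tendsto (fun ε : ℝ => ε ^ (1 - s)) (nhdsWithin 0 (Set.Ioi 0)) (nhds 0) :=
      h0.mono_left nhdsWithin_le_nhds
    simpa using h1.const_mul (4 / s)
  apply squeeze_zero' ?_ ?_ hg
  · filter_upwards [hev] with ε hε
    exact (I4_aux s α hs0 hs1 hα0 hα1 ε hε.1 hε.2).1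
  · filter_upwards [hev] with ε hε
    exact (I4_aux s α hs0 hs1 hα0 hα1 ε hε.1 hε.2).2
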